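/- Let E be a finite-dimensional real inner product space, and let φ : E → ℝ be differentiable, strictly convex, and supercoercive (φ(x)/‖x‖ → ∞ as ‖x‖ → ∞). Let V ⊆ E be a linear subspace and x₀, yᴾ ∈ E. Let x_EQ be the unique point of x₀ + V with ∇φ(x_EQ) − yᴾ ∈ V^⊥. Then x_EQ is the unique minimizer of x' ↦ D[x₀‖x'] over the equilibrium manifold {x' ∈ E : ∇φ(x') − yᴾ ∈ V^⊥}, and the minimum value equals D[x₀‖x_EQ]; i.e., the total entropy production during the relaxation from x₀ equals (Ω/T̃ times) the minimized divergence from x₀ to the equilibrium manifold. -/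

import Mathlib

open scoped RealInnerProductSpace
open scoped RealInnerProductSpace

private lemma grad_lt_aux {E : Type*} [NormedAddCommGroup E] [InnerProductSpace ℝ E]
    [FiniteDimensional ℝ E]
    (φ : E → ℝ) (hdiff : Differentiable ℝ φ) (hconv : StrictConvexOn ℝ Set.univ φ)
    {a b : E} (hab : a ≠ b) : ⟪gradient φ a, b - a⟫ < φ b - φ a := by
  set g : ℝ → ℝ := fun t => φ (a + t • (b - a)) with hg
  have hline : ∀ t : ℝ, HasDerivAt (fun t : ℝ => a + t • (b - a)) (b - a) t := by
    intro t
    simpa using ((hasDerivAt_id t).smul_const (b - a)).const_add a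
  have hgd : ∀ t : ℝ, HasDerivAt g ⟪gradient φ (a + t • (b - a)), b - a⟫ t := by
    intro t
    have h1 : HasFDerivAt φ (InnerProductSpace.toDual ℝ E (gradient φ (a + t • (b - a))))
        (a + t • (b - a)) := ((hdiff _).hasGradientAt).hasFDerivAt
    have h2 : HasDerivAt g (InnerProductSpace.toDual ℝ E (gradient φ (a + t • (b - a))) (b - a)) t :=
      h1.comp_hasDerivAt t (hline t)
    simpa using h2
  have hginj : Function.Injective (fun t : ℝ => a + t • (b - a)) := by
    intro s t hst
    simp only [add_right_inj] at hst
    have hba : b - a ≠ 0 := sub_ne_zero.mpr hab.symm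
    exact smul_left_injective ℝ hba hst
  have hgc : StrictConvexOn ℝ Set.univ g := by
    refine ⟨convex_univ, ?_⟩
    intro s _ t _ hst p q hp hq hpq
    have key : a + (p * s + q * t) • (b - a)
        = p • (a + s • (b - a)) + q • (a + t • (b - a)) := by
      have hq' : q = 1 - p := by linarith
      subst hq'
      module
    calc g (p • s + q • t) = φ (p • (a + s • (b - a)) + q • (a + t • (b - a))) := by
          simp only [hg, smul_eq_mul] at *
          rw [key]
      _ < p • φ (a + s • (b - a)) + q • φ (a + t • (b - a)) :=
          hconv.2 (Set.mem_univ _) (Set.mem_univ _)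
            (fun h => hst (hginj h)) hp hq hpq
      _ = p • g s + q • g t := rfl
  have := hgc.lt_slope_of_hasDerivAt (Set.mem_univ 0) (Set.mem_univ 1) one_pos
      (by simpa using hgd 0)
  have h1 : g 1 = φ b := by simp [hg]
  have h0 : g 0 = φ a := by simp [hg]
  rw [slope_def_field, h1, h0] at this
  simpa using this


/-- **The equilibrium state minimizes the divergence over the equilibrium manifold.**
Let `φ` be differentiable, strictly convex and supercoercive on a finite-dimensional real
inner product space, `V` a linear subspace, and `xEQ` the point of `x₀ + V` with
`∇φ xEQ - yP ∈ Vᗮ`.  Then `xEQ` is the unique minimizer of `x' ↦ D[x₀‖x']` over the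
equilibrium manifold `{x' | ∇φ x' - yP ∈ Vᗮ}`, and the minimum value is `D[x₀‖xEQ]`
(the total entropy production of the relaxation from `x₀`, up to the factor Ω/T̃). -/
theorem equilibrium_minimizes_divergence_on_equilibrium_manifold
    {E : Type*} [NormedAddCommGroup E] [InnerProductSpace ℝ E] [FiniteDimensional ℝ E]
    (φ : E → ℝ) (hdiff : Differentiable ℝ φ)
    (hconv : StrictConvexOn ℝ Set.univ φ)
    (hcoer : Filter.Tendsto (fun x => φ x / ‖x‖) (Filter.cocompact E) Filter.atTop)
    (V : Submodule ℝ E) (x₀ yP xEQ : E)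
    (hEQmem : xEQ - x₀ ∈ V) (hEQ : gradient φ xEQ - yP ∈ Vᗮ) :
    ∀ xP : E, gradient φ xP - yP ∈ Vᗮ → xP ≠ xEQ →
      φ x₀ - φ xEQ - ⟪gradient φ xEQ, x₀ - xEQ⟫ <
        φ x₀ - φ xP - ⟪gradient φ xP, x₀ - xP⟫ := by
  intro xP hP hne
  have hkey := grad_lt_aux φ hdiff hconv (a := xP) (b := xEQ) hne
  have hmem : gradient φ xEQ - gradient φ xP ∈ Vᗮ := by
    have := Submodule.sub_mem Vᗮ hEQ hP
    simpa using this
  have horth : ⟪gradient φ xEQ - gradient φ xP, xEQ - x₀⟫ = 0 := by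
    have := (Submodule.mem_orthogonal' V _).mp hmem (xEQ - x₀) hEQmem
    simpa using this
  have e1 : ⟪gradient φ xP, x₀ - xP⟫
      = ⟪gradient φ xP, x₀ - xEQ⟫ + ⟪gradient φ xP, xEQ - xP⟫ := by
    rw [← inner_add_right]; congr 1; abel
  have e2 : ⟪gradient φ xEQ, xEQ - x₀⟫ - ⟪gradient φ xP, xEQ - x₀⟫ = 0 := by
    simpa [inner_sub_left] using horth
  have e3 : ⟪gradient φ xEQ, x₀ - xEQ⟫ = -⟪gradient φ xEQ, xEQ - x₀⟫ := by
    rw [← inner_neg_right]; congr 1; abel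
  have e4 : ⟪gradient φ xP, x₀ - xEQ⟫ = -⟪gradient φ xP, xEQ - x₀⟫ := by
    rw [← inner_neg_right]; congr 1; abel
  linarith
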